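/- arXiv:2412.18595 — 2 statements merged into one kernel-verified Lean document; each statement's English description precedes it below -/
import Mathlib

section
/- Any graph with skewness ℓ (i.e., obtainable from a planar graph by adding ℓ edges) has basis number at most 2+ℓ. -/
open scoped Classical

noncomputable section

/-- Helper: quotients of finite types are finite. -/
noncomputable def quotFintype {α : Type} [Fintype α] (r : α → α → Prop) : Fintype (Quot r) :=
  Fintype.ofSurjective (Quot.mk r) fun q => Quot.exists_rep q

/-- A finite multigraph.  Each edge `e` carries an (arbitrarily chosen) ordering of its two
endpoints, `fst e` and `snd e`; a loop is an edge with `fst e = snd e`. -/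
structure Multigraph where
  V : Type
  E : Type
  fintV : Fintype V
  fintE : Fintype E
  fst : E → V
  snd : E → V

attribute [instance] Multigraph.fintV Multigraph.fintE

namespace Multigraph

variable (G : Multigraph)

/-- Incidence of a vertex and an edge, modulo 2 (a loop is incident twice, i.e. 0 mod 2). -/
noncomputable def inc (v : G.V) (e : G.E) : ZMod 2 :=
  (if G.fst e = v then 1 else 0) + (if G.snd e = v then 1 else 0)

/-- The cycle space of `G` over `F_2`: characteristic vectors of edge sets in which every
vertex has even degree (i.e. Eulerian subgraphs), with addition = symmetric difference. -/
noncomputable def cycleSpace : Submodule (ZMod 2) (G.E → ZMod 2) where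
  carrier := {x | ∀ v : G.V, ∑ e : G.E, G.inc v e * x e = 0}
  zero_mem' := by intro v; simp
  add_mem' := by
    intro a b ha hb v
    have h : ∀ e : G.E, G.inc v e * (a + b) e = G.inc v e * a e + G.inc v e * b e := by
      intro e
      show G.inc v e * (a e + b e) = G.inc v e * a e + G.inc v e * b e
      ring
    rw [Finset.sum_congr rfl fun e _ => h e, Finset.sum_add_distrib, ha v, hb v, add_zero]
  smul_mem' := by
    intro c x hx v
    have h : ∀ e : G.E, G.inc v e * (c • x) e = c * (G.inc v e * x e) := by
      intro e
      show G.inc v e * (c * x e) = c * (G.inc v e * x e)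
      ring
    rw [Finset.sum_congr rfl fun e _ => h e, ← Finset.mul_sum, hx v, mul_zero]

/-- The charge of an edge `e` with respect to a collection `B` of (characteristic vectors of)
subgraphs: the number of members of `B` containing `e`. -/
noncomputable def charge (B : Finset (G.E → ZMod 2)) (e : G.E) : ℕ :=
  (B.filter fun x => x e ≠ 0).card

/-- `B` is a basis of the cycle space of `G`. -/
def IsCycleBasis (B : Finset (G.E → ZMod 2)) : Prop :=
  (∀ x ∈ B, x ∈ G.cycleSpace) ∧
    LinearIndependent (ZMod 2) (fun x : B => (x : G.E → ZMod 2)) ∧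
    Submodule.span (ZMod 2) (B : Set (G.E → ZMod 2)) = G.cycleSpace

/-- `B` is a `k`-basis: a basis of the cycle space in which every edge has charge at most `k`. -/
def IsKBasis (k : ℕ) (B : Finset (G.E → ZMod 2)) : Prop :=
  G.IsCycleBasis B ∧ ∀ e : G.E, G.charge B e ≤ k

/-- The basis number of `G`: the least `k` such that `G` has a `k`-basis. -/
noncomputable def basisNum : ℕ := sInf {k | ∃ B, G.IsKBasis k B}

/-- Adjacency of two vertices. -/
def Adj (a b : G.V) : Prop :=
  ∃ e : G.E, (G.fst e = a ∧ G.snd e = b) ∨ (G.fst e = b ∧ G.snd e = a)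

/-- Connectivity. -/
def Connected : Prop :=
  Nonempty G.V ∧ ∀ a b : G.V, Relation.ReflTransGen G.Adj a b

/-- Degree of a vertex (a loop counts twice). -/
noncomputable def degree (v : G.V) : ℕ :=
  ∑ e : G.E, ((if G.fst e = v then 1 else 0) + (if G.snd e = v then 1 else 0))

/-- The subgraph with the same vertex set and edge set restricted to `S`. -/
noncomputable def edgeRestrict (S : Set G.E) : Multigraph where
  V := G.V
  E := S
  fintV := G.fintV
  fintE := (Set.toFinite S).fintype
  fst := fun e => G.fst e.1
  snd := fun e => G.snd e.1

/-- Deletion of a vertex (and all edges incident with it). -/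
noncomputable def deleteVertex (v : G.V) : Multigraph where
  V := {u : G.V // u ≠ v}
  E := {e : G.E // G.fst e ≠ v ∧ G.snd e ≠ v}
  fintV := by classical exact inferInstance
  fintE := by classical exact inferInstance
  fst := fun e => ⟨G.fst e.1, e.2.1⟩
  snd := fun e => ⟨G.snd e.1, e.2.2⟩

/-- `G` is 2-connected: at least 3 vertices, connected, and no cutvertex. -/
def TwoConnected : Prop :=
  G.Connected ∧ 3 ≤ Nat.card G.V ∧ ∀ v : G.V, (G.deleteVertex v).Connected

/-- A cycle of length `n` in `G`: `n` distinct vertices and `n` distinct edges, with edge `i`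
joining vertex `i` to vertex `i+1` (cyclically). -/
def IsCycleOn (n : ℕ) (vs : Fin n → G.V) (es : Fin n → G.E) : Prop :=
  Function.Injective vs ∧ Function.Injective es ∧
    ∀ i : Fin n,
      (G.fst (es i) = vs i ∧ G.snd (es i) = vs (finRotate n i)) ∨
      (G.fst (es i) = vs (finRotate n i) ∧ G.snd (es i) = vs i)

/-- A path with `n` edges, given by its (distinct) vertices and its edges. -/
def IsPathOn (n : ℕ) (vs : Fin (n + 1) → G.V) (es : Fin n → G.E) : Prop :=
  Function.Injective vs ∧
    ∀ i : Fin n,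
      (G.fst (es i) = vs i.castSucc ∧ G.snd (es i) = vs i.succ) ∨
      (G.fst (es i) = vs i.succ ∧ G.snd (es i) = vs i.castSucc)

/-- `p` is the characteristic vector of (the edge set of) a path from `s` to `t`. -/
def IsPathVec (s t : G.V) (p : G.E → ZMod 2) : Prop :=
  ∃ (n : ℕ) (vs : Fin (n + 1) → G.V) (es : Fin n → G.E),
    G.IsPathOn n vs es ∧ vs 0 = s ∧ vs (Fin.last n) = t ∧
      ∀ f : G.E, p f ≠ 0 ↔ ∃ i, es i = f

/-- Two edges lie in a common block: they are equal, or they lie on a common cycle. -/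
def BlockRel (e f : G.E) : Prop :=
  e = f ∨ ∃ (n : ℕ) (vs : Fin n → G.V) (es : Fin n → G.E),
    1 ≤ n ∧ G.IsCycleOn n vs es ∧ (∃ i, es i = e) ∧ (∃ j, es j = f)

/-- `T` is a spanning tree of `G` (as an edge set): the spanning subgraph with edge set `T`
is connected and has no cycles. -/
def IsSpanningTree (T : Set G.E) : Prop :=
  (G.edgeRestrict T).Connected ∧
    ∀ (n : ℕ) (vs : Fin n → (G.edgeRestrict T).V) (es : Fin n → (G.edgeRestrict T).E),
      (G.edgeRestrict T).IsCycleOn n vs es → n = 0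

/-- Contraction of the edge `e`: identify its two endpoints and delete `e`. -/
noncomputable def contract (e : G.E) : Multigraph where
  V := Quot (fun a b : G.V => a = G.fst e ∧ b = G.snd e)
  E := {f : G.E // f ≠ e}
  fintV := quotFintype _
  fintE := by classical exact inferInstance
  fst := fun f => Quot.mk _ (G.fst f.1)
  snd := fun f => Quot.mk _ (G.snd f.1)

/-- Addition of a (possibly parallel) edge joining `u` and `v`. -/
noncomputable def addEdge (u v : G.V) : Multigraph where
  V := G.V
  E := Option G.E
  fintV := G.fintV
  fintE := inferInstance
  fst := fun o => o.elim u G.fst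
  snd := fun o => o.elim v G.snd

/-- Subdivision of the edge `e`: delete `e` and add a new vertex (`none`) joined to both
endpoints of `e`. -/
noncomputable def subdivide (e : G.E) : Multigraph where
  V := Option G.V
  E := {f : G.E // f ≠ e} ⊕ Bool
  fintV := inferInstance
  fintE := by classical exact inferInstance
  fst := Sum.elim (fun f => some (G.fst f.1))
    (fun b => cond b (some (G.fst e)) (some (G.snd e)))
  snd := Sum.elim (fun f => some (G.snd f.1)) (fun _ => none)

/-- Replacement of the edge `e` of `G` by the graph `H` with terminals `s`, `t`:
delete `e`, take the disjoint union with `H`, and identify the endpoints of `e`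
with the terminals. -/
noncomputable def replaceEdge (e : G.E) (H : Multigraph) (s t : H.V) : Multigraph where
  V := Quot (fun a b : G.V ⊕ H.V =>
        (a = Sum.inl (G.fst e) ∧ b = Sum.inr s) ∨ (a = Sum.inl (G.snd e) ∧ b = Sum.inr t))
  E := {f : G.E // f ≠ e} ⊕ H.E
  fintV := quotFintype _
  fintE := by classical exact inferInstance
  fst := Sum.elim (fun f => Quot.mk _ (Sum.inl (G.fst f.1)))
    (fun f => Quot.mk _ (Sum.inr (H.fst f)))
  snd := Sum.elim (fun f => Quot.mk _ (Sum.inl (G.snd f.1)))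
    (fun f => Quot.mk _ (Sum.inr (H.snd f)))

/-! ### Combinatorial embeddings (rotation systems) and planarity -/

/-- Darts: each edge gives two darts. -/
def Dart : Type := G.E × Bool

noncomputable instance : Fintype G.Dart := inferInstanceAs (Fintype (G.E × Bool))

/-- The vertex at which a dart is based. -/
def dartVertex (d : G.Dart) : G.V := cond d.2 (G.fst d.1) (G.snd d.1)

/-- The involution exchanging the two darts of each edge. -/
def dartFlip : Equiv.Perm G.Dart where
  toFun d := (d.1, !d.2)
  invFun d := (d.1, !d.2)
  left_inv := fun d => by cases d; simp; rfl
  right_inv := fun d => by cases d; simp; rfl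

/-- `σ` is a rotation system: its orbits are exactly the sets of darts based at a
common vertex. -/
def IsRotation (σ : Equiv.Perm G.Dart) : Prop :=
  ∀ d d' : G.Dart, σ.SameCycle d d' ↔ G.dartVertex d = G.dartVertex d'

/-- The face permutation of a rotation system. -/
def facePerm (σ : Equiv.Perm G.Dart) : Equiv.Perm G.Dart := G.dartFlip.trans σ

/-- The faces of the embedding given by `σ`: orbits of the face permutation. -/
def Faces (σ : Equiv.Perm G.Dart) : Type := Quot (G.facePerm σ).SameCycle

/-- The face containing a given dart. -/
def faceOf (σ : Equiv.Perm G.Dart) (d : G.Dart) : G.Faces σ := Quot.mk _ d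

noncomputable def numFaces (σ : Equiv.Perm G.Dart) : ℕ := Nat.card (G.Faces σ)

noncomputable def numComponents : ℕ := Nat.card (Quot G.Adj)

/-- The number of connected components containing at least one edge. -/
noncomputable def numEdgedComponents : ℕ :=
  Nat.card {c : Quot G.Adj // ∃ e : G.E, Quot.mk G.Adj (G.fst e) = c}

/-- `σ` is a planar (genus zero) embedding, by Euler's formula
(componentwise `V - E + F = 2`, where components without edges contribute one global face). -/
def IsPlanarRotation (σ : Equiv.Perm G.Dart) : Prop :=
  G.IsRotation σ ∧
    G.numFaces σ + Nat.card G.V = Nat.card G.E + G.numComponents + G.numEdgedComponents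

/-- `G` is planar: it admits a genus-zero combinatorial embedding. -/
def IsPlanar : Prop := ∃ σ : Equiv.Perm G.Dart, G.IsPlanarRotation σ

/-- The boundary of a face, as an element of `F_2^E`: the edges having exactly one of
their two darts on the face. -/
noncomputable def faceBoundary (σ : Equiv.Perm G.Dart) (c : G.Faces σ) : G.E → ZMod 2 :=
  fun e => ∑ b : Bool, if G.faceOf σ (e, b) = c then 1 else 0

/-- The vertex `v` lies on the face `c`. -/
def VertexOnFace (σ : Equiv.Perm G.Dart) (v : G.V) (c : G.Faces σ) : Prop :=
  ∃ d : G.Dart, G.faceOf σ d = c ∧ G.dartVertex d = v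

/-- The edge `e` lies on the face `c`. -/
def EdgeOnFace (σ : Equiv.Perm G.Dart) (e : G.E) (c : G.Faces σ) : Prop :=
  ∃ b : Bool, G.faceOf σ (e, b) = c

/-! ### Auxiliary development for the proof -/

section Aux

private lemma zmod2_cases (a : ZMod 2) : a = 0 ∨ a = 1 := by revert a; decide

private lemma zmod2_add_eq_zero {a b : ZMod 2} (h : a + b = 0) : a = b := by
  revert h; revert a b; decide

private lemma zmod2_ind_iff {P Q : Prop} [Decidable P] [Decidable Q]
    (h : (if P then (1:ZMod 2) else 0) + (if Q then (1:ZMod 2) else 0) = 0) : P ↔ Q := by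
  split_ifs at h with h1 h2 h2
  · exact iff_of_true h1 h2
  · exact absurd h (by decide)
  · exact absurd h (by decide)
  · exact iff_of_false h1 h2

variable (G : Multigraph)

/-- The incidence matrix of `G` over `F₂`. -/
noncomputable def incM : Matrix G.V G.E (ZMod 2) := fun v e => G.inc v e

lemma mem_cycleSpace_iff (x : G.E → ZMod 2) :
    x ∈ G.cycleSpace ↔ ∀ v : G.V, ∑ e : G.E, G.inc v e * x e = 0 := Iff.rfl

lemma incM_mulVecLin (x : G.E → ZMod 2) (v : G.V) :
    (G.incM.mulVecLin x) v = ∑ e : G.E, G.inc v e * x e := by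
  simp [incM, Matrix.mulVecLin_apply, Matrix.mulVec, dotProduct]

lemma cycleSpace_eq_ker : G.cycleSpace = LinearMap.ker G.incM.mulVecLin := by
  ext x
  rw [mem_cycleSpace_iff, LinearMap.mem_ker, funext_iff]
  exact forall_congr' fun v => by rw [incM_mulVecLin]; exact Iff.rfl

lemma incMT_apply (y : G.V → ZMod 2) (e : G.E) :
    (G.incM.transpose.mulVecLin y) e = y (G.fst e) + y (G.snd e) := by
  have h : ∀ v : G.V, G.incM.transpose e v * y v
      = (if G.fst e = v then y v else 0) + (if G.snd e = v then y v else 0) := by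
    intro v
    simp only [Matrix.transpose_apply, incM, Multigraph.inc]
    split_ifs <;> ring
  calc (G.incM.transpose.mulVecLin y) e = ∑ v : G.V, G.incM.transpose e v * y v := rfl
    _ = ∑ v : G.V, ((if G.fst e = v then y v else 0) + (if G.snd e = v then y v else 0)) :=
        Finset.sum_congr rfl fun v _ => h v
    _ = y (G.fst e) + y (G.snd e) := by
        rw [Finset.sum_add_distrib, Finset.sum_ite_eq, Finset.sum_ite_eq]
        simp

lemma adj_of_edge (e : G.E) : G.Adj (G.fst e) (G.snd e) := ⟨e, Or.inl ⟨rfl, rfl⟩⟩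

lemma finrank_ker_incMT :
    Module.finrank (ZMod 2) (LinearMap.ker G.incM.transpose.mulVecLin)
      = Nat.card (Quot G.Adj) := by
  letI : Fintype (Quot G.Adj) := quotFintype _
  set L : (Quot G.Adj → ZMod 2) →ₗ[ZMod 2] (G.V → ZMod 2) :=
    LinearMap.funLeft (ZMod 2) (ZMod 2) (Quot.mk G.Adj) with hL
  have hrange : LinearMap.range L = LinearMap.ker (G.incM.transpose.mulVecLin) := by
    apply le_antisymm
    · rintro _ ⟨f, rfl⟩
      rw [LinearMap.mem_ker]
      funext e
      have hq : Quot.mk G.Adj (G.fst e) = Quot.mk G.Adj (G.snd e) :=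
        Quot.sound (G.adj_of_edge e)
      show (G.incM.transpose.mulVecLin (L f)) e = 0
      rw [incMT_apply]
      show f (Quot.mk G.Adj (G.fst e)) + f (Quot.mk G.Adj (G.snd e)) = 0
      rw [hq]
      exact CharTwo.add_self_eq_zero _
    · intro y hy
      rw [LinearMap.mem_ker] at hy
      have hker : ∀ e : G.E, y (G.fst e) = y (G.snd e) := by
        intro e
        apply zmod2_add_eq_zero
        rw [← G.incMT_apply y e, hy]
        rfl
      have hadj : ∀ a b, G.Adj a b → y a = y b := by
        rintro a b ⟨e, (⟨h1, h2⟩ | ⟨h1, h2⟩)⟩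
        · rw [← h1, ← h2]; exact hker e
        · rw [← h1, ← h2]; exact (hker e).symm
      exact ⟨Quot.lift y hadj, by funext v; rfl⟩
  have hinj : Function.Injective L := by
    intro f g h
    funext q
    induction q using Quot.ind with
    | _ v => exact congrFun h v
  rw [← hrange]
  rw [← LinearEquiv.finrank_eq (LinearEquiv.ofInjective L hinj)]
  rw [Module.finrank_fintype_fun_eq_card, Nat.card_eq_fintype_card]

lemma finrank_cycleSpace_add :
    Module.finrank (ZMod 2) G.cycleSpace + Nat.card G.V
      = Nat.card G.E + G.numComponents := by
  haveI : Fact (Nat.Prime 2) := ⟨Nat.prime_two⟩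
  have h1 := LinearMap.finrank_range_add_finrank_ker G.incM.mulVecLin
  have h2 := LinearMap.finrank_range_add_finrank_ker G.incM.transpose.mulVecLin
  rw [Module.finrank_fintype_fun_eq_card] at h1 h2
  have h3 : G.incM.transpose.rank = G.incM.rank := Matrix.rank_transpose _
  have h4 := G.finrank_ker_incMT
  have h5 : Matrix.rank G.incM
      = Module.finrank (ZMod 2) (LinearMap.range G.incM.mulVecLin) := rfl
  have h6 : Matrix.rank G.incM.transpose
      = Module.finrank (ZMod 2) (LinearMap.range G.incM.transpose.mulVecLin) := rfl
  rw [G.cycleSpace_eq_ker]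
  rw [Nat.card_eq_fintype_card, Nat.card_eq_fintype_card]
  show Module.finrank (ZMod 2) (LinearMap.ker G.incM.mulVecLin) + Fintype.card G.V
      = Fintype.card G.E + G.numComponents
  unfold Multigraph.numComponents
  omega

end Aux

section MacLane

variable (G : Multigraph) (σ : Equiv.Perm G.Dart)

lemma dartFlip_apply (d : G.Dart) : G.dartFlip d = (d.1, !d.2) := rfl

lemma dartVertex_true (e : G.E) : G.dartVertex (e, true) = G.fst e := rfl
lemma dartVertex_false (e : G.E) : G.dartVertex (e, false) = G.snd e := rfl

lemma faceOf_flip_eq (d : G.Dart) : G.faceOf σ (G.dartFlip d) = G.faceOf σ (σ d) := by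
  apply Quot.sound
  refine ⟨1, ?_⟩
  show (G.facePerm σ) (G.dartFlip d) = σ d
  show σ (G.dartFlip (G.dartFlip d)) = σ d
  congr 1
  cases d with
  | mk e b => cases b <;> rfl

variable {σ}

lemma dartVertex_perm (hrot : G.IsRotation σ) (d : G.Dart) :
    G.dartVertex (σ d) = G.dartVertex d :=
  ((hrot d (σ d)).mp ⟨1, by simp⟩).symm

/-- The face boundaries lie in the cycle space. -/
lemma faceBoundary_mem_cycleSpace (hrot : G.IsRotation σ) (c : G.Faces σ) :
    G.faceBoundary σ c ∈ G.cycleSpace := by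
  rw [mem_cycleSpace_iff]
  intro v
  set g : G.Dart → ZMod 2 := fun d => if G.faceOf σ d = c then 1 else 0 with hg
  have e1 : (Finset.univ : Finset G.Dart) = (Finset.univ : Finset (G.E × Bool)) := by
    congr 1
  have hsum : ∀ F : G.Dart → ZMod 2, ∑ d : G.Dart, F d = ∑ e : G.E, ∑ b : Bool, F (e, b) := by
    intro F
    rw [Finset.sum_congr e1 (fun _ _ => rfl)]
    exact Fintype.sum_prod_type F
  have h1 : ∑ e : G.E, G.inc v e * G.faceBoundary σ c e
      = ∑ d : G.Dart, (if G.dartVertex d = v then 1 else 0) * (g d + g (G.dartFlip d)) := by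
    rw [hsum]
    apply Finset.sum_congr rfl
    intro e _
    rw [Fintype.sum_bool]
    have hb : G.faceBoundary σ c e = g (e, true) + g (e, false) := by
      show (∑ b : Bool, if G.faceOf σ (e, b) = c then 1 else 0) = _
      rw [Fintype.sum_bool]
    have hfl1 : G.dartFlip (e, true) = (e, false) := rfl
    have hfl2 : G.dartFlip (e, false) = (e, true) := rfl
    rw [hb, hfl1, hfl2, dartVertex_true, dartVertex_false]
    show G.inc v e * (g (e, true) + g (e, false)) = _
    unfold Multigraph.inc
    ring
  have h2 : ∀ d : G.Dart, g (G.dartFlip d) = g (σ d) := by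
    intro d
    show (if G.faceOf σ (G.dartFlip d) = c then (1:ZMod 2) else 0) = _
    rw [G.faceOf_flip_eq σ d]
  have h3 : ∑ d : G.Dart, (if G.dartVertex d = v then (1:ZMod 2) else 0) * g (σ d)
      = ∑ d : G.Dart, (if G.dartVertex d = v then (1:ZMod 2) else 0) * g d := by
    calc ∑ d : G.Dart, (if G.dartVertex d = v then (1:ZMod 2) else 0) * g (σ d)
        = ∑ d : G.Dart, (if G.dartVertex (σ d) = v then (1:ZMod 2) else 0) * g (σ d) := by
          apply Finset.sum_congr rfl
          intro d _
          rw [G.dartVertex_perm hrot d]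
      _ = ∑ d : G.Dart, (if G.dartVertex d = v then (1:ZMod 2) else 0) * g d :=
          Equiv.sum_comp σ (fun d => (if G.dartVertex d = v then (1:ZMod 2) else 0) * g d)
  rw [h1]
  have h4 : ∀ d : G.Dart, (if G.dartVertex d = v then (1:ZMod 2) else 0) * (g d + g (G.dartFlip d))
      = (if G.dartVertex d = v then 1 else 0) * g d
        + (if G.dartVertex d = v then 1 else 0) * g (σ d) := by
    intro d; rw [h2 d]; ring
  rw [Finset.sum_congr rfl fun d _ => h4 d, Finset.sum_add_distrib, h3]
  exact CharTwo.add_self_eq_zero _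

/-- Reachability of darts under the group generated by `σ` and the flip. -/
def Reach : G.Dart → G.Dart → Prop :=
  Relation.EqvGen (fun d d' => d' = σ d ∨ d' = G.dartFlip d)

lemma reach_pow (n : ℕ) (d : G.Dart) : G.Reach (σ := σ) d ((σ ^ n) d) := by
  induction n generalizing d with
  | zero => exact Relation.EqvGen.refl d
  | succ n ih =>
      have h : (σ ^ (n + 1)) d = (σ ^ n) (σ d) := by
        rw [pow_succ]; rfl
      rw [h]
      exact Relation.EqvGen.trans _ _ _
        (Relation.EqvGen.rel _ _ (Or.inl rfl)) (ih (σ d))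

lemma reach_of_dartVertex_eq (hrot : G.IsRotation σ) {d d' : G.Dart}
    (h : G.dartVertex d = G.dartVertex d') : G.Reach (σ := σ) d d' := by
  have sc : σ.SameCycle d d' := (hrot d d').mpr h
  obtain ⟨i, -, -, hi⟩ := Equiv.Perm.SameCycle.exists_pow_eq σ sc
  rw [← hi]
  exact G.reach_pow i d

lemma comp_eq_of_reach (hrot : G.IsRotation σ) {d d' : G.Dart}
    (h : G.Reach (σ := σ) d d') :
    Quot.mk G.Adj (G.dartVertex d) = Quot.mk G.Adj (G.dartVertex d') := by
  have h' : Relation.EqvGen (fun d d' => d' = σ d ∨ d' = G.dartFlip d) d d' := h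
  clear h
  induction h' with
  | rel a b hab =>
      rcases hab with h1 | h1
      · rw [h1, G.dartVertex_perm hrot]
      · rw [h1]
        apply Quot.sound
        obtain ⟨e, bb⟩ := a
        cases bb
        · exact ⟨e, Or.inr ⟨rfl, rfl⟩⟩
        · exact ⟨e, Or.inl ⟨rfl, rfl⟩⟩
  | refl a => rfl
  | symm a b _ ih => exact ih.symm
  | trans a b c _ _ ih1 ih2 => exact ih1.trans ih2

lemma adj_symm : Symmetric G.Adj := by
  rintro a b ⟨e, (⟨h1, h2⟩ | ⟨h1, h2⟩)⟩
  · exact ⟨e, Or.inr ⟨h1, h2⟩⟩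
  · exact ⟨e, Or.inl ⟨h1, h2⟩⟩

lemma reach_of_comp_eq (hrot : G.IsRotation σ) {d d' : G.Dart}
    (h : Quot.mk G.Adj (G.dartVertex d) = Quot.mk G.Adj (G.dartVertex d')) :
    G.Reach (σ := σ) d d' := by
  have key : ∀ a b : G.V, Relation.EqvGen G.Adj a b → Relation.ReflTransGen G.Adj a b := by
    have hsym : Symmetric (Relation.ReflTransGen G.Adj) :=
      fun a b h => by
        haveI : Std.Symm G.Adj := ⟨fun x y hxy => G.adj_symm hxy⟩
        exact (Relation.ReflTransGen.symmetric (r := G.Adj)).symm a b h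
    intro a b hab
    induction hab with
    | rel a b hab => exact Relation.ReflTransGen.single hab
    | refl a => exact Relation.ReflTransGen.refl
    | symm a b _ ih => exact hsym ih
    | trans a b c _ _ ih1 ih2 => exact ih1.trans ih2
  have hrtg : Relation.ReflTransGen G.Adj (G.dartVertex d) (G.dartVertex d') :=
    key _ _ (Quot.eq.mp h)
  clear h
  suffices H : ∀ b, Relation.ReflTransGen G.Adj (G.dartVertex d) b →
      ∀ d'' : G.Dart, G.dartVertex d'' = b → G.Reach (σ := σ) d d'' by
    exact H _ hrtg d' rfl
  intro b hb
  induction hb with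
  | refl => intro d'' hd''; exact G.reach_of_dartVertex_eq hrot hd''.symm
  | tail hab hbc ih =>
      rename_i bb cc
      intro d'' hd''
      rcases hbc with ⟨e, (⟨h1, h2⟩ | ⟨h1, h2⟩)⟩
      · have r1 : G.Reach (σ := σ) d (e, true) := ih (e, true) h1
        have r2 : G.Reach (σ := σ) (e, true) (e, false) :=
          Relation.EqvGen.rel _ _ (Or.inr rfl)
        have r3 : G.Reach (σ := σ) (e, false) d'' := by
          apply G.reach_of_dartVertex_eq hrot
          rw [dartVertex_false, h2, hd'']
        exact (r1.trans _ _ _ r2).trans _ _ _ r3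
      · have r1 : G.Reach (σ := σ) d (e, false) := ih (e, false) h2
        have r2 : G.Reach (σ := σ) (e, false) (e, true) :=
          Relation.EqvGen.rel _ _ (Or.inr rfl)
        have r3 : G.Reach (σ := σ) (e, true) d'' := by
          apply G.reach_of_dartVertex_eq hrot
          rw [dartVertex_true, h1, hd'']
        exact (r1.trans _ _ _ r2).trans _ _ _ r3

/-- A set of faces which is "closed" across every edge is invariant along reachability. -/
lemma closed_faces_invariant (T : Set (G.Faces σ))
    (hT : ∀ e : G.E, (G.faceOf σ (e, true) ∈ T ↔ G.faceOf σ (e, false) ∈ T))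
    {d d' : G.Dart} (h : G.Reach (σ := σ) d d') :
    (G.faceOf σ d ∈ T ↔ G.faceOf σ d' ∈ T) := by
  have hflip : ∀ dd : G.Dart, (G.faceOf σ dd ∈ T ↔ G.faceOf σ (G.dartFlip dd) ∈ T) := by
    rintro ⟨e, b⟩
    cases b
    · exact (hT e).symm
    · exact hT e
  have h' : Relation.EqvGen (fun d d' => d' = σ d ∨ d' = G.dartFlip d) d d' := h
  clear h
  induction h' with
  | rel a b hab =>
      rcases hab with h1 | h1
      · rw [h1, ← G.faceOf_flip_eq σ a]
        exact hflip a
      · rw [h1]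
        exact hflip a
  | refl a => exact Iff.rfl
  | symm a b _ ih => exact ih.symm
  | trans a b c _ _ ih1 ih2 => exact ih1.trans ih2

lemma reach_facePerm_pow (n : ℕ) (d : G.Dart) :
    G.Reach (σ := σ) d (((G.facePerm σ) ^ n) d) := by
  induction n generalizing d with
  | zero => exact Relation.EqvGen.refl d
  | succ n ih =>
      have h : ((G.facePerm σ) ^ (n + 1)) d = ((G.facePerm σ) ^ n) ((G.facePerm σ) d) := by
        rw [pow_succ]; rfl
      rw [h]
      have step : G.Reach (σ := σ) d ((G.facePerm σ) d) := by
        have h2 : (G.facePerm σ) d = σ (G.dartFlip d) := rfl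
        rw [h2]
        exact Relation.EqvGen.trans _ _ _
          (Relation.EqvGen.rel _ _ (Or.inr rfl))
          (Relation.EqvGen.rel _ _ (Or.inl rfl))
      exact step.trans _ _ _ (ih _)

lemma sameCycle_reach {d d' : G.Dart} (h : (G.facePerm σ).SameCycle d d') :
    G.Reach (σ := σ) d d' := by
  obtain ⟨i, -, -, hi⟩ := Equiv.Perm.SameCycle.exists_pow_eq (G.facePerm σ) h
  rw [← hi]
  exact G.reach_facePerm_pow i d

lemma reach_of_faceOf_eq {d d' : G.Dart} (h : G.faceOf σ d = G.faceOf σ d') :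
    G.Reach (σ := σ) d d' := by
  apply G.sameCycle_reach
  have hequiv : Equivalence (G.facePerm σ).SameCycle :=
    ⟨Equiv.Perm.SameCycle.refl _, fun h => h.symm, fun h1 h2 => h1.trans h2⟩
  exact (Equivalence.eqvGen_iff hequiv).mp (Quot.eq.mp h)

end MacLane

section MacLaneMain

variable (H : Multigraph)

/-- MacLane's criterion, sufficiency: a planar multigraph has a 2-basis. -/
lemma maclane_basis (hp : H.IsPlanar) :
    ∃ B : Finset (H.E → ZMod 2), H.IsCycleBasis B ∧ ∀ e : H.E, H.charge B e ≤ 2 := by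
  obtain ⟨σ, hrot, heuler⟩ := hp
  letI : Fintype (H.Faces σ) := quotFintype _
  letI : Fintype (Quot H.Adj) := quotFintype _
  haveI : Fact (Nat.Prime 2) := ⟨Nat.prime_two⟩
  -- the chosen dropped face in each edged component
  set DropF : {c : Quot H.Adj // ∃ e : H.E, Quot.mk H.Adj (H.fst e) = c} → H.Faces σ :=
    fun κ => H.faceOf σ (κ.2.choose, true) with hDropF
  have hDropComp : ∀ κ : {c : Quot H.Adj // ∃ e : H.E, Quot.mk H.Adj (H.fst e) = c},
      Quot.mk H.Adj (H.dartVertex (κ.2.choose, true)) = κ.1 :=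
    fun κ => κ.2.choose_spec
  have hfb : ∀ (c : H.Faces σ) (e : H.E), H.faceBoundary σ c e
      = (if H.faceOf σ (e, true) = c then 1 else 0)
        + (if H.faceOf σ (e, false) = c then 1 else 0) := by
    intro c e
    show (∑ b : Bool, if H.faceOf σ (e, b) = c then 1 else 0) = _
    rw [Fintype.sum_bool]
  -- key independence statement
  have hzero : ∀ T : Finset (H.Faces σ), (∀ κ, DropF κ ∉ T) →
      (∑ c ∈ T, H.faceBoundary σ c) = 0 → T = ∅ := by
    intro T hTdrop hTsum
    have hT : ∀ e : H.E,
        (H.faceOf σ (e, true) ∈ (↑T : Set (H.Faces σ)) ↔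
          H.faceOf σ (e, false) ∈ (↑T : Set (H.Faces σ))) := by
      intro e
      have h1 : (∑ c ∈ T, H.faceBoundary σ c) e = 0 := by rw [hTsum]; rfl
      rw [Finset.sum_apply] at h1
      have h2 : ∀ c ∈ T, H.faceBoundary σ c e
          = (if H.faceOf σ (e, true) = c then (1:ZMod 2) else 0)
            + (if H.faceOf σ (e, false) = c then 1 else 0) := fun c _ => hfb c e
      rw [Finset.sum_congr rfl h2, Finset.sum_add_distrib,
        Finset.sum_ite_eq T (H.faceOf σ (e, true)) (fun _ => (1:ZMod 2)),
        Finset.sum_ite_eq T (H.faceOf σ (e, false)) (fun _ => (1:ZMod 2))] at h1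
      exact zmod2_ind_iff h1
    apply Finset.eq_empty_iff_forall_notMem.mpr
    intro c hc
    obtain ⟨d, hd⟩ := Quot.exists_rep c
    have hcomp : Quot.mk H.Adj (H.fst d.1) = Quot.mk H.Adj (H.dartVertex d) := by
      obtain ⟨e, b⟩ := d
      cases b
      · exact Quot.sound (H.adj_of_edge e)
      · rfl
    set κ : {c : Quot H.Adj // ∃ e : H.E, Quot.mk H.Adj (H.fst e) = c} :=
      ⟨Quot.mk H.Adj (H.dartVertex d), ⟨d.1, hcomp⟩⟩ with hκ
    have hreach : H.Reach (σ := σ) d (κ.2.choose, true) := by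
      apply H.reach_of_comp_eq hrot
      rw [hDropComp κ]
    have hiff := H.closed_faces_invariant (T := (↑T : Set (H.Faces σ))) hT hreach
    have hdmem : H.faceOf σ d ∈ (↑T : Set (H.Faces σ)) := by
      show Quot.mk _ d ∈ _
      rw [hd]
      exact hc
    exact hTdrop κ (hiff.mp hdmem)
  -- the kept faces
  set Kept : Finset (H.Faces σ) := Finset.univ \ Finset.image DropF Finset.univ with hKept
  have hKeptDrop : ∀ κ, DropF κ ∉ Kept := fun κ h =>
    (Finset.mem_sdiff.mp h).2 (Finset.mem_image_of_mem _ (Finset.mem_univ κ))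
  -- linear independence of kept face boundaries
  have hindepFam : LinearIndependent (ZMod 2)
      (fun c : ↥(↑Kept : Set (H.Faces σ)) => H.faceBoundary σ ↑c) := by
    rw [Fintype.linearIndependent_iff]
    intro g hg
    set T : Finset (H.Faces σ) :=
      Finset.image (fun i : ↥(↑Kept : Set (H.Faces σ)) => (i : H.Faces σ))
        (Finset.univ.filter fun i : ↥(↑Kept : Set (H.Faces σ)) => g i ≠ 0) with hTdef
    have hTsub : ∀ c ∈ T, c ∈ Kept := by
      intro c hcT
      obtain ⟨i, -, rfl⟩ := Finset.mem_image.mp hcT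
      exact i.2
    have hTzero : T = ∅ := by
      apply hzero T (fun κ hκT => hKeptDrop κ (hTsub _ hκT))
      rw [Finset.sum_image (by intro i _ j _ h; exact Subtype.ext h)]
      calc ∑ i ∈ Finset.univ.filter (fun i : ↥(↑Kept : Set (H.Faces σ)) => g i ≠ 0),
            H.faceBoundary σ ↑i
          = ∑ i : ↥(↑Kept : Set (H.Faces σ)), g i • H.faceBoundary σ ↑i := by
            rw [Finset.sum_filter]
            apply Finset.sum_congr rfl
            intro i _
            rcases zmod2_cases (g i) with h | h <;> simp [h]
        _ = 0 := hg
    intro i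
    by_contra hgi
    have hmem : (i : H.Faces σ) ∈ T := by
      rw [hTdef]
      apply Finset.mem_image_of_mem
      simp [hgi]
    rw [hTzero] at hmem
    exact absurd hmem (Finset.notMem_empty _)
  have hinj : Set.InjOn (H.faceBoundary σ) ↑Kept := by
    intro c1 h1 c2 h2 heq
    have := hindepFam.injective (a₁ := ⟨c1, h1⟩) (a₂ := ⟨c2, h2⟩) heq
    exact congrArg Subtype.val this
  -- the basis
  set B : Finset (H.E → ZMod 2) := Kept.image (H.faceBoundary σ) with hB
  have hBmem : ∀ x ∈ B, x ∈ H.cycleSpace := by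
    intro x hx
    obtain ⟨c, -, rfl⟩ := Finset.mem_image.mp hx
    exact H.faceBoundary_mem_cycleSpace hrot c
  have hBindep : LinearIndependent (ZMod 2) (fun x : ↥(↑B : Set (H.E → ZMod 2)) =>
      (x : H.E → ZMod 2)) := by
    have h1 := (linearIndepOn_iff_image hinj).mp hindepFam
    rw [hB, Finset.coe_image]
    exact h1
  have hcard : B.card = Kept.card := Finset.card_image_of_injOn hinj
  -- counting
  have hDropInj : Function.Injective DropF := by
    intro κ κ' h
    have hreach : H.Reach (σ := σ) (κ.2.choose, true) (κ'.2.choose, true) :=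
      H.reach_of_faceOf_eq h
    have hcc := H.comp_eq_of_reach hrot hreach
    apply Subtype.ext
    rw [← hDropComp κ, ← hDropComp κ']
    exact hcc
  have hFcount : Kept.card + Nat.card
      {c : Quot H.Adj // ∃ e : H.E, Quot.mk H.Adj (H.fst e) = c}
        = Fintype.card (H.Faces σ) := by
    have h1 : (Finset.image DropF Finset.univ).card
        = Nat.card {c : Quot H.Adj // ∃ e : H.E, Quot.mk H.Adj (H.fst e) = c} := by
      rw [Finset.card_image_of_injective _ hDropInj, Finset.card_univ,
        Nat.card_eq_fintype_card]
    have h2 := Finset.card_sdiff_of_subset (Finset.subset_univ (Finset.image DropF Finset.univ))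
    have h3 : (Finset.image DropF Finset.univ).card ≤ Fintype.card (H.Faces σ) :=
      Finset.card_le_univ _
    rw [hKept, h2, Finset.card_univ]
    omega
  have hdim := H.finrank_cycleSpace_add
  have heuler' : H.numFaces σ = Fintype.card (H.Faces σ) := Nat.card_eq_fintype_card
  have hKeptdim : Kept.card = Module.finrank (ZMod 2) H.cycleSpace := by
    unfold Multigraph.numEdgedComponents at heuler
    rw [heuler'] at heuler
    omega
  have hspan : Submodule.span (ZMod 2) (↑B : Set (H.E → ZMod 2)) = H.cycleSpace := by
    apply Submodule.eq_of_le_of_finrank_le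
    · rw [Submodule.span_le]
      intro x hx
      exact hBmem x hx
    · rw [finrank_span_finset_eq_card hBindep, hcard, hKeptdim]
  refine ⟨B, ⟨hBmem, hBindep, hspan⟩, ?_⟩
  intro e
  show (B.filter fun x => x e ≠ 0).card ≤ 2
  rw [hB, Finset.filter_image]
  calc ((Kept.filter fun c => H.faceBoundary σ c e ≠ 0).image (H.faceBoundary σ)).card
      ≤ (Kept.filter fun c => H.faceBoundary σ c e ≠ 0).card := Finset.card_image_le
    _ ≤ ({H.faceOf σ (e, true), H.faceOf σ (e, false)} : Finset (H.Faces σ)).card := by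
        apply Finset.card_le_card
        intro c hcf
        obtain ⟨-, hne⟩ := Finset.mem_filter.mp hcf
        by_contra hcm
        simp only [Finset.mem_insert, Finset.mem_singleton, not_or] at hcm
        apply hne
        rw [hfb c e, if_neg (fun h => hcm.1 h.symm), if_neg (fun h => hcm.2 h.symm), add_zero]
    _ ≤ 2 := by
        apply le_trans (Finset.card_insert_le _ _)
        simp

end MacLaneMain

section Transfer

variable (G : Multigraph) (A : Finset G.E)

/-- Extension by zero of a vector on the edges of `G` minus `A` to all edges of `G`. -/
noncomputable def extMap : ((G.edgeRestrict {e | e ∉ A}).E → ZMod 2) →ₗ[ZMod 2] (G.E → ZMod 2) where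
  toFun y := fun e => if h : e ∈ ({e | e ∉ A} : Set G.E) then y ⟨e, h⟩ else 0
  map_add' y z := by
    funext e
    by_cases h : e ∈ ({e | e ∉ A} : Set G.E)
    · simp only [Pi.add_apply, dif_pos h]; rfl
    · simp only [Pi.add_apply, dif_neg h, add_zero]
  map_smul' r y := by
    funext e
    by_cases h : e ∈ ({e | e ∉ A} : Set G.E)
    · simp only [Pi.smul_apply, dif_pos h, RingHom.id_apply]; rfl
    · simp only [Pi.smul_apply, dif_neg h, RingHom.id_apply, smul_zero]

lemma extMap_apply_mem (y : (G.edgeRestrict {e | e ∉ A}).E → ZMod 2)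
    (f : (G.edgeRestrict {e | e ∉ A}).E) : G.extMap A y f.1 = y f := by
  show (if h : f.1 ∈ ({e | e ∉ A} : Set G.E) then y ⟨f.1, h⟩ else 0) = y f
  rw [dif_pos f.2]; rfl

lemma extMap_apply_not_mem (y : (G.edgeRestrict {e | e ∉ A}).E → ZMod 2)
    (e : G.E) (he : e ∈ A) : G.extMap A y e = 0 := by
  show (if h : e ∈ ({e | e ∉ A} : Set G.E) then y ⟨e, h⟩ else 0) = 0
  rw [dif_neg (by simp [he])]

lemma extMap_injective : Function.Injective (G.extMap A) := by
  intro y z h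
  funext f
  have h1 := congrFun h f.1
  rw [G.extMap_apply_mem A y f, G.extMap_apply_mem A z f] at h1
  exact h1

lemma sum_restrict_eq (Fn : G.E → ZMod 2) (hF : ∀ e ∈ A, Fn e = 0) :
    ∑ f : (G.edgeRestrict {e | e ∉ A}).E, Fn f.1 = ∑ e : G.E, Fn e := by
  have h1 : ∑ e ∈ Finset.univ.filter (fun e => e ∉ A), Fn e
      = ∑ f : (G.edgeRestrict {e | e ∉ A}).E, Fn f.1 :=
    Finset.sum_subtype _ (by simp) Fn
  rw [← h1]
  apply Finset.sum_subset (Finset.filter_subset _ _)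
  intro e _ he
  exact hF e (by simpa using he)

lemma extMap_mem_cycleSpace (y : (G.edgeRestrict {e | e ∉ A}).E → ZMod 2)
    (hy : y ∈ (G.edgeRestrict {e | e ∉ A}).cycleSpace) :
    G.extMap A y ∈ G.cycleSpace := by
  rw [mem_cycleSpace_iff]
  intro v
  have h1 : ∑ e : G.E, G.inc v e * G.extMap A y e
      = ∑ f : (G.edgeRestrict {e | e ∉ A}).E, G.inc v f.1 * G.extMap A y f.1 := by
    refine (G.sum_restrict_eq A _ ?_).symm
    intro e he
    rw [G.extMap_apply_not_mem A y e he, mul_zero]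
  rw [h1]
  have h2 : ∀ f : (G.edgeRestrict {e | e ∉ A}).E,
      G.inc v f.1 * G.extMap A y f.1 = G.inc v f.1 * y f := by
    intro f
    rw [G.extMap_apply_mem A y f]
  rw [Finset.sum_congr rfl fun f _ => h2 f]
  exact hy v

lemma exists_extMap_of_vanish (x : G.E → ZMod 2) (hx : x ∈ G.cycleSpace)
    (hxA : ∀ e ∈ A, x e = 0) :
    ∃ y ∈ (G.edgeRestrict {e | e ∉ A}).cycleSpace, G.extMap A y = x := by
  refine ⟨fun f => x f.1, ?_, ?_⟩
  · show ∀ v : G.V, ∑ f : (G.edgeRestrict {e | e ∉ A}).E, G.inc v f.1 * x f.1 = 0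
    intro v
    rw [G.sum_restrict_eq A (fun e => G.inc v e * x e)
      (fun e he => by show G.inc v e * x e = 0; rw [hxA e he, mul_zero])]
    exact hx v
  · funext e
    by_cases h : e ∈ ({e | e ∉ A} : Set G.E)
    · show (if h' : e ∈ ({e | e ∉ A} : Set G.E) then x e else 0) = x e
      rw [dif_pos h]
    · show (if h' : e ∈ ({e | e ∉ A} : Set G.E) then x e else 0) = x e
      rw [dif_neg h, hxA e (by simpa using h)]

end Transfer

end Multigraph
/-- Any graph with skewness `ℓ` (i.e., obtainable from a planar graph by
adding `ℓ` edges) has basis number at most `2 + ℓ`. -/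
theorem basisNum_le_of_skewness (G : Multigraph) (ℓ : ℕ) (A : Finset G.E)
    (hA : A.card = ℓ) (hplanar : (G.edgeRestrict {e | e ∉ A}).IsPlanar) :
    G.basisNum ≤ 2 + ℓ := by
  classical
  haveI : Fact (Nat.Prime 2) := ⟨Nat.prime_two⟩
  obtain ⟨B0, hB0basis, hB0charge⟩ := (G.edgeRestrict {e | e ∉ A}).maclane_basis hplanar
  obtain ⟨hB0mem, hB0indep, hB0span⟩ := hB0basis
  set B1 : Finset (G.E → ZMod 2) := B0.image (fun y => G.extMap A y) with hB1
  have hB1indep : LinearIndependent (ZMod 2)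
      (fun x : ↥(↑B1 : Set (G.E → ZMod 2)) => (x : G.E → ZMod 2)) := by
    have hmap := hB0indep.map' (G.extMap A)
      (LinearMap.ker_eq_bot.mpr (G.extMap_injective A))
    have hinjOn : Set.InjOn (fun y => G.extMap A y)
        (↑B0 : Set ((G.edgeRestrict {e | e ∉ A}).E → ZMod 2)) :=
      fun a _ b _ h => G.extMap_injective A h
    have h2 : LinearIndependent (ZMod 2)
        (fun x : ↥(↑B0 : Set ((G.edgeRestrict {e | e ∉ A}).E → ZMod 2)) =>
          G.extMap A (x : (G.edgeRestrict {e | e ∉ A}).E → ZMod 2)) := hmap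
    have h3 := (linearIndepOn_iff_image hinjOn).mp h2
    rw [hB1, Finset.coe_image]
    exact h3
  have hB1mem : (↑B1 : Set (G.E → ZMod 2)) ⊆ ↑G.cycleSpace := by
    intro x hx
    rw [hB1, Finset.coe_image] at hx
    obtain ⟨y, hy, rfl⟩ := hx
    exact G.extMap_mem_cycleSpace A y (hB0mem y hy)
  have hB1indep' : LinearIndepOn (ZMod 2) id (↑B1 : Set (G.E → ZMod 2)) := hB1indep
  set bset := hB1indep'.extend hB1mem with hbdef
  have hb_sub : bset ⊆ ↑G.cycleSpace := hB1indep'.extend_subset hB1mem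
  have hb_sup : (↑B1 : Set (G.E → ZMod 2)) ⊆ bset := hB1indep'.subset_extend hB1mem
  have hb_indep : LinearIndependent (ZMod 2) (Subtype.val : bset → (G.E → ZMod 2)) :=
    hB1indep'.linearIndepOn_extend hB1mem
  have hb_span_sup : (↑G.cycleSpace : Set (G.E → ZMod 2))
      ⊆ ↑(Submodule.span (ZMod 2) bset) := hB1indep'.subset_span_extend hB1mem
  have hb_span : Submodule.span (ZMod 2) bset = G.cycleSpace := by
    apply le_antisymm
    · rw [Submodule.span_le]; exact hb_sub
    · intro x hx; exact hb_span_sup hx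
  have hfin : bset.Finite := Set.toFinite _
  set B : Finset (G.E → ZMod 2) := hfin.toFinset with hBdef
  have hcoe : (↑B : Set (G.E → ZMod 2)) = bset := hfin.coe_toFinset
  have hBindep' : LinearIndependent (ZMod 2)
      (Subtype.val : ↥(↑B : Set (G.E → ZMod 2)) → (G.E → ZMod 2)) := by
    rw [hcoe]; exact hb_indep
  have hBbasis : G.IsCycleBasis B := by
    refine ⟨?_, ?_, ?_⟩
    · intro x hx
      exact hb_sub (hfin.mem_toFinset.mp hx)
    · exact hBindep'
    · rw [hcoe]; exact hb_span
  have hB1subB : B1 ⊆ B := by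
    intro x hx
    exact hfin.mem_toFinset.mpr (hb_sup hx)
  have hcardB : B.card = Module.finrank (ZMod 2) G.cycleSpace := by
    have h := finrank_span_finset_eq_card hBindep'
    rw [hcoe, hb_span] at h
    exact h.symm
  have hcardB1 : B1.card = Module.finrank (ZMod 2)
      (Submodule.span (ZMod 2) (↑B1 : Set (G.E → ZMod 2))) :=
    (finrank_span_finset_eq_card hB1indep).symm
  set π : ↥G.cycleSpace →ₗ[ZMod 2] (↥A → ZMod 2) :=
    (LinearMap.funLeft (ZMod 2) (ZMod 2) (fun a : ↥A => (a : G.E))).comp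
      G.cycleSpace.subtype with hπ
  have hkerπ : Submodule.map G.cycleSpace.subtype (LinearMap.ker π)
      ≤ Submodule.span (ZMod 2) (↑B1 : Set (G.E → ZMod 2)) := by
    rintro x ⟨w, hw, rfl⟩
    have hvan : ∀ e ∈ A, (w : G.E → ZMod 2) e = 0 := by
      intro e he
      exact congrFun (LinearMap.mem_ker.mp hw) ⟨e, he⟩
    obtain ⟨y, hy, hyx⟩ := G.exists_extMap_of_vanish A (w : G.E → ZMod 2) w.2 hvan
    rw [← hB0span] at hy
    have hmem : (w : G.E → ZMod 2) ∈ Submodule.map (G.extMap A)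
        (Submodule.span (ZMod 2) (↑B0 : Set ((G.edgeRestrict {e | e ∉ A}).E → ZMod 2))) :=
      ⟨y, hy, hyx⟩
    rw [Submodule.map_span] at hmem
    rw [hB1, Finset.coe_image]
    exact hmem
  have hrankle : Module.finrank (ZMod 2) G.cycleSpace
      ≤ Module.finrank (ZMod 2)
        (Submodule.span (ZMod 2) (↑B1 : Set (G.E → ZMod 2))) + ℓ := by
    have h1 := LinearMap.finrank_range_add_finrank_ker π
    have h2 : Module.finrank (ZMod 2) (LinearMap.range π) ≤ ℓ := by
      have h := Submodule.finrank_le (LinearMap.range π)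
      rw [Module.finrank_fintype_fun_eq_card, Fintype.card_coe, hA] at h
      exact h
    have h3 : Module.finrank (ZMod 2) (LinearMap.ker π)
        ≤ Module.finrank (ZMod 2)
          (Submodule.span (ZMod 2) (↑B1 : Set (G.E → ZMod 2))) := by
      rw [← Submodule.finrank_map_subtype_eq G.cycleSpace (LinearMap.ker π)]
      exact Submodule.finrank_mono hkerπ
    omega
  have hchargeB : ∀ e : G.E, G.charge B e ≤ 2 + ℓ := by
    intro e
    show (B.filter fun x => x e ≠ 0).card ≤ 2 + ℓ
    have hsplit : B.filter (fun x => x e ≠ 0)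
        ⊆ (B1.filter fun x => x e ≠ 0) ∪ (B \ B1) := by
      intro x hx
      obtain ⟨hxB, hxe⟩ := Finset.mem_filter.mp hx
      by_cases hxB1 : x ∈ B1
      · exact Finset.mem_union_left _ (Finset.mem_filter.mpr ⟨hxB1, hxe⟩)
      · exact Finset.mem_union_right _ (Finset.mem_sdiff.mpr ⟨hxB, hxB1⟩)
    have hc1 : (B1.filter fun x => x e ≠ 0).card ≤ 2 := by
      rw [hB1, Finset.filter_image]
      refine le_trans Finset.card_image_le ?_
      by_cases he : e ∈ A
      · have hempty : (B0.filter fun y => G.extMap A y e ≠ 0) = ∅ := by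
          apply Finset.filter_eq_empty_iff.mpr
          intro y _
          simp only [ne_eq, not_not]
          exact G.extMap_apply_not_mem A y e he
        rw [hempty]
        simp
      · have he' : e ∈ ({e | e ∉ A} : Set G.E) := he
        have hfilt : (B0.filter fun y => G.extMap A y e ≠ 0)
            = (B0.filter fun y => y ⟨e, he'⟩ ≠ 0) := by
          apply Finset.filter_congr
          intro y _
          rw [G.extMap_apply_mem A y ⟨e, he'⟩]
        rw [hfilt]
        exact hB0charge ⟨e, he'⟩
    have hc2 : (B \ B1).card ≤ ℓ := by
      rw [Finset.card_sdiff_of_subset hB1subB, hcardB, hcardB1, tsub_le_iff_right]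
      exact hrankle.trans (le_of_eq (Nat.add_comm _ _))
    calc (B.filter fun x => x e ≠ 0).card
        ≤ ((B1.filter fun x => x e ≠ 0) ∪ (B \ B1)).card := Finset.card_le_card hsplit
      _ ≤ (B1.filter fun x => x e ≠ 0).card + (B \ B1).card := Finset.card_union_le _ _
      _ ≤ 2 + ℓ := Nat.add_le_add hc1 hc2
  exact Nat.sInf_le ⟨B, hBbasis, hchargeB⟩
end
end

section
/- The Tutte–Coxeter graph (Tutte 8-cage), a 3-regular graph on 30 vertices with girth 8, has basis number at least 4. -/
open scoped Classical

noncomputable section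

namespace TutteAux
open Multigraph Finset

variable {G : Multigraph}

def GirthHyp (G : Multigraph) : Prop :=
  ∀ (n : ℕ) (vs : Fin n → G.V) (es : Fin n → G.E), G.IsCycleOn n vs es → 1 ≤ n → 8 ≤ n

lemma zmod2_eq_one (a : ZMod 2) (h : a ≠ 0) : a = 1 := by
  revert h; revert a; decide

lemma noLoop (hg : GirthHyp G) (e : G.E) : G.fst e ≠ G.snd e := by
  intro h
  have h8 := hg 1 (fun _ => G.fst e) (fun _ => e) ?_ le_rfl
  · omega
  · refine ⟨fun a b _ => Subsingleton.elim a b, fun a b _ => Subsingleton.elim a b, ?_⟩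
    intro i
    exact Or.inl ⟨rfl, h.symm⟩

lemma inc_eq_one (hnl : ∀ e, G.fst e ≠ G.snd e) {v : G.V} {e : G.E}
    (hv : G.fst e = v ∨ G.snd e = v) : G.inc v e = 1 := by
  unfold Multigraph.inc
  rcases hv with h | h
  · rw [if_pos h, if_neg (fun h2 => hnl e (h.trans h2.symm)), add_zero]
  · rw [if_pos h, if_neg (fun h2 => hnl e (h2.trans h.symm)), zero_add]

lemma inc_eq_zero {v : G.V} {e : G.E}
    (hv : ¬(G.fst e = v ∨ G.snd e = v)) : G.inc v e = 0 := by
  push_neg at hv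
  unfold Multigraph.inc
  rw [if_neg hv.1, if_neg hv.2, add_zero]

lemma exists_second_edge (hnl : ∀ e, G.fst e ≠ G.snd e)
    {x : G.E → ZMod 2} (hx : x ∈ G.cycleSpace) {e : G.E} (hxe : x e ≠ 0)
    {v : G.V} (hv : G.fst e = v ∨ G.snd e = v) :
    ∃ f, x f ≠ 0 ∧ f ≠ e ∧ (G.fst f = v ∨ G.snd f = v) := by
  by_contra hcon
  push_neg at hcon
  have hsum : ∑ f : G.E, G.inc v f * x f = 0 := hx v
  have hone : ∀ f ∈ Finset.univ, f ≠ e → G.inc v f * x f = 0 := by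
    intro f _ hfe
    by_cases hf : G.fst f = v ∨ G.snd f = v
    · by_cases hxf : x f = 0
      · rw [hxf, mul_zero]
      · rcases hf with h | h
        · exact absurd h (hcon f hxf hfe).1
        · exact absurd h (hcon f hxf hfe).2
    · rw [inc_eq_zero hf, zero_mul]
  rw [Finset.sum_eq_single e hone (by simp)] at hsum
  rw [inc_eq_one hnl hv, one_mul] at hsum
  exact hxe hsum

variable (G)

noncomputable def other (f : G.E) (v : G.V) : G.V :=
  if G.fst f = v then G.snd f else G.fst f

noncomputable def nextE (x : G.E → ZMod 2) (e0 : G.E) (e : G.E) (v : G.V) : G.E :=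
  if h : ∃ f, x f ≠ 0 ∧ f ≠ e ∧ (G.fst f = v ∨ G.snd f = v) then h.choose else e0

noncomputable def walk (x : G.E → ZMod 2) (e0 : G.E) : ℕ → G.E × G.V
  | 0 => (e0, G.snd e0)
  | n+1 =>
      (nextE G x e0 (walk x e0 n).1 (walk x e0 n).2,
       other G (nextE G x e0 (walk x e0 n).1 (walk x e0 n).2) (walk x e0 n).2)

variable {G}

lemma walk_inv (hnl : ∀ e, G.fst e ≠ G.snd e) {x : G.E → ZMod 2} {e0 : G.E}
    (hx : x ∈ G.cycleSpace) (he0 : x e0 ≠ 0) (n : ℕ) :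
    x (walk G x e0 n).1 ≠ 0 ∧
      (G.fst (walk G x e0 n).1 = (walk G x e0 n).2 ∨
       G.snd (walk G x e0 n).1 = (walk G x e0 n).2) := by
  induction n with
  | zero => exact ⟨he0, Or.inr rfl⟩
  | succ n ih =>
    have hex : ∃ f, x f ≠ 0 ∧ f ≠ (walk G x e0 n).1 ∧
        (G.fst f = (walk G x e0 n).2 ∨ G.snd f = (walk G x e0 n).2) :=
      exists_second_edge hnl hx ih.1 ih.2
    have hne : nextE G x e0 (walk G x e0 n).1 (walk G x e0 n).2 = hex.choose := by
      unfold nextE; exact dif_pos hex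
    obtain ⟨hc1, hc2, hc3⟩ := hex.choose_spec
    have h1 : (walk G x e0 (n+1)).1 = hex.choose := by
      show (nextE G x e0 (walk G x e0 n).1 (walk G x e0 n).2) = _
      exact hne
    have h2 : (walk G x e0 (n+1)).2
        = other G hex.choose (walk G x e0 n).2 := by
      show other G (nextE G x e0 (walk G x e0 n).1 (walk G x e0 n).2) (walk G x e0 n).2 = _
      rw [hne]
    refine ⟨by rw [h1]; exact hc1, ?_⟩
    rw [h1, h2]
    unfold other
    by_cases h : G.fst hex.choose = (walk G x e0 n).2
    · rw [if_pos h]; exact Or.inr rfl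
    · rw [if_neg h]; exact Or.inl rfl

lemma walk_step (hnl : ∀ e, G.fst e ≠ G.snd e) {x : G.E → ZMod 2} {e0 : G.E}
    (hx : x ∈ G.cycleSpace) (he0 : x e0 ≠ 0) (n : ℕ) :
    x (walk G x e0 (n+1)).1 ≠ 0 ∧ (walk G x e0 (n+1)).1 ≠ (walk G x e0 n).1 ∧
      ((G.fst (walk G x e0 (n+1)).1 = (walk G x e0 n).2 ∧
        G.snd (walk G x e0 (n+1)).1 = (walk G x e0 (n+1)).2) ∨
       (G.fst (walk G x e0 (n+1)).1 = (walk G x e0 (n+1)).2 ∧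
        G.snd (walk G x e0 (n+1)).1 = (walk G x e0 n).2)) := by
  have ih := walk_inv hnl hx he0 n
  have hex : ∃ f, x f ≠ 0 ∧ f ≠ (walk G x e0 n).1 ∧
      (G.fst f = (walk G x e0 n).2 ∨ G.snd f = (walk G x e0 n).2) :=
    exists_second_edge hnl hx ih.1 ih.2
  have hne : nextE G x e0 (walk G x e0 n).1 (walk G x e0 n).2 = hex.choose := by
    unfold nextE; exact dif_pos hex
  obtain ⟨hc1, hc2, hc3⟩ := hex.choose_spec
  have h1 : (walk G x e0 (n+1)).1 = hex.choose := by
    show (nextE G x e0 (walk G x e0 n).1 (walk G x e0 n).2) = _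
    exact hne
  have h2 : (walk G x e0 (n+1)).2 = other G hex.choose (walk G x e0 n).2 := by
    show other G (nextE G x e0 (walk G x e0 n).1 (walk G x e0 n).2) (walk G x e0 n).2 = _
    rw [hne]
  refine ⟨by rw [h1]; exact hc1, by rw [h1]; exact hc2, ?_⟩
  rw [h1, h2]
  unfold other
  by_cases h : G.fst hex.choose = (walk G x e0 n).2
  · rw [if_pos h]; exact Or.inl ⟨h, rfl⟩
  · rw [if_neg h]
    rcases hc3 with h' | h'
    · exact absurd h' h
    · exact Or.inr ⟨rfl, h'⟩

lemma eight_le_card_T (hg : GirthHyp G) {x : G.E → ZMod 2}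
    (hx : x ∈ G.cycleSpace) (hxne : x ≠ 0) :
    8 ≤ (Finset.univ.filter
      (fun v : G.V => ∃ e, x e ≠ 0 ∧ (G.fst e = v ∨ G.snd e = v))).card := by
  classical
  have hnl := noLoop hg
  obtain ⟨e0, he0⟩ : ∃ e, x e ≠ 0 := by
    by_contra h; push_neg at h
    exact hxne (funext fun e => h e)
  set vv : ℕ → G.V := fun n => (walk G x e0 n).2 with hvv
  set ge : ℕ → G.E := fun n => (walk G x e0 (n+1)).1 with hge
  have hstep := fun n => walk_step hnl hx he0 n
  have ha : ∀ n, x (ge n) ≠ 0 := fun n => (hstep n).1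
  have hb : ∀ n, ge (n+1) ≠ ge n := fun n => (hstep (n+1)).2.1
  have hc : ∀ n, (G.fst (ge n) = vv n ∧ G.snd (ge n) = vv (n+1)) ∨
      (G.fst (ge n) = vv (n+1) ∧ G.snd (ge n) = vv n) := by
    intro n
    rcases (hstep n).2.2 with ⟨h1, h2⟩ | ⟨h1, h2⟩
    · exact Or.inl ⟨h1, h2⟩
    · exact Or.inr ⟨h1, h2⟩
  have hpig : ∃ j, ∃ i, i < j ∧ vv i = vv j := by
    obtain ⟨a, b, hab, h⟩ := Finite.exists_ne_map_eq_of_infinite vv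
    rcases lt_or_gt_of_ne hab with h' | h'
    · exact ⟨b, a, h', h⟩
    · exact ⟨a, b, h', h.symm⟩
  set j0 := Nat.find hpig with hj0
  obtain ⟨i, hij, hveq⟩ : ∃ i, i < j0 ∧ vv i = vv j0 := Nat.find_spec hpig
  have hmin : ∀ a b, a < b → b < j0 → vv a ≠ vv b := by
    intro a b hab hbj heq
    exact Nat.find_min hpig hbj ⟨a, hab, heq⟩
  have vinj' : ∀ a b, i ≤ a → a < b → b ≤ j0 → vv a = vv b → a = i ∧ b = j0 := by
    intro a b ha1 hab hb2 heq2
    rcases Nat.lt_or_ge b j0 with hbj | hbj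
    · exact absurd heq2 (hmin a b hab hbj)
    · have hbj0 : b = j0 := le_antisymm hb2 hbj
      subst hbj0
      refine ⟨?_, rfl⟩
      by_contra hai
      have hia : i < a := lt_of_le_of_ne ha1 (Ne.symm hai)
      exact hmin i a hia hab (hveq.trans heq2.symm)
  have vinj : ∀ a b, i ≤ a → a ≤ j0 → i ≤ b → b ≤ j0 → vv a = vv b →
      a = b ∨ (a = i ∧ b = j0) ∨ (a = j0 ∧ b = i) := by
    intro a b ha1 ha2 hb1 hb2 heq2
    rcases Nat.lt_trichotomy a b with h | h | h
    · exact Or.inr (Or.inl (vinj' a b ha1 h hb2 heq2))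
    · exact Or.inl h
    · obtain ⟨u1, u2⟩ := vinj' b a hb1 h ha2 heq2.symm
      exact Or.inr (Or.inr ⟨u2, u1⟩)
  have einj' : ∀ k l, i ≤ k → k < l → l + 1 ≤ j0 → ge k ≠ ge l := by
    intro k l hk hkl hlj heq
    have hvor : vv k = vv l ∨ vv (k+1) = vv l := by
      rcases hc k with ⟨a1, a2⟩ | ⟨a1, a2⟩ <;> rcases hc l with ⟨b1, b2⟩ | ⟨b1, b2⟩
      · exact Or.inl (a1.symm.trans (by rw [heq]; exact b1))
      · exact Or.inr (a2.symm.trans (by rw [heq]; exact b2))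
      · exact Or.inr (a1.symm.trans (by rw [heq]; exact b1))
      · exact Or.inl (a2.symm.trans (by rw [heq]; exact b2))
    rcases hvor with h | h
    · rcases vinj k l hk (by omega) (by omega) (by omega) h with h' | ⟨h1, h2⟩ | ⟨h1, h2⟩ <;> omega
    · rcases vinj (k+1) l (by omega) (by omega) (by omega) (by omega) h with h' | ⟨h1, h2⟩ | ⟨h1, h2⟩
      · exact (h' ▸ hb k) heq.symm
      · omega
      · omega
  obtain ⟨m', hm'⟩ : ∃ m', j0 - i = m' + 1 := ⟨j0 - i - 1, by omega⟩
  set m := m' + 1 with hm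
  have him : i + m = j0 := by omega
  set vs' : Fin m → G.V := fun r => vv (i + (r : ℕ)) with hvs'
  set es' : Fin m → G.E := fun r => ge (i + (r : ℕ)) with hes'
  have hvsr : ∀ r : Fin m, vs' r = vv (i + (r : ℕ)) := fun r => rfl
  have hesr : ∀ r : Fin m, es' r = ge (i + (r : ℕ)) := fun r => rfl
  have hvsinj : Function.Injective vs' := by
    intro r s hrs
    have hr := r.isLt; have hs := s.isLt
    rw [hvsr, hvsr] at hrs
    rcases vinj (i + r) (i + s) (by omega) (by omega) (by omega) (by omega) hrs with
      h | ⟨h1, h2⟩ | ⟨h1, h2⟩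
    · exact Fin.ext (by omega)
    · exact absurd h2 (by omega)
    · exact absurd h1 (by omega)
  have hesinj : Function.Injective es' := by
    intro r s hrs
    by_contra hne2
    have hr := r.isLt; have hs := s.isLt
    have hrsne : (r : ℕ) ≠ (s : ℕ) := fun h => hne2 (Fin.ext h)
    rw [hesr, hesr] at hrs
    rcases Nat.lt_or_ge (r : ℕ) (s : ℕ) with h | h
    · exact einj' (i + r) (i + s) (by omega) (by omega) (by omega) hrs
    · exact einj' (i + s) (i + r) (by omega) (by omega) (by omega) hrs.symm
  have hrot : ∀ r : Fin m, vs' (finRotate m r) = vv (i + (r : ℕ) + 1) := by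
    intro r
    have hfr : finRotate (m' + 1) r = r + 1 := finRotate_succ_apply r
    rw [show finRotate m r = r + 1 from hfr]
    rcases Nat.lt_or_ge ((r : ℕ) + 1) (m' + 1) with h | h
    · have hv1 : ((r + 1 : Fin (m' + 1)) : ℕ) = (r : ℕ) + 1 :=
        Fin.val_add_one_of_lt (by rw [Fin.lt_iff_val_lt_val, Fin.val_last]; omega)
      rw [hvsr, hv1, Nat.add_assoc]
    · have hr := r.isLt
      have hlast : r = Fin.last m' := Fin.ext (by simp [Fin.val_last]; omega)
      rw [hlast, Fin.last_add_one, hvsr]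
      simp only [Fin.val_zero, Nat.add_zero]
      rw [show i + (Fin.last m' : ℕ) + 1 = j0 by simp [Fin.val_last]; omega]
      exact hveq
  have hcyc : G.IsCycleOn m vs' es' := by
    refine ⟨hvsinj, hesinj, ?_⟩
    intro r
    rw [hrot r, hvsr, hesr]
    exact hc (i + (r : ℕ))
  have h8m : 8 ≤ m := hg m vs' es' hcyc (by omega)
  have hmaps : ∀ r : Fin m, vs' r ∈ Finset.univ.filter
      (fun v : G.V => ∃ e, x e ≠ 0 ∧ (G.fst e = v ∨ G.snd e = v)) := by
    intro r
    simp only [Finset.mem_filter, Finset.mem_univ, true_and]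
    refine ⟨ge (i + (r : ℕ)), ha _, ?_⟩
    rw [hvsr]
    rcases hc (i + (r : ℕ)) with ⟨h1, _⟩ | ⟨_, h2⟩
    · exact Or.inl h1
    · exact Or.inr h2
  calc 8 ≤ m := h8m
    _ = (Finset.univ : Finset (Fin m)).card := by simp
    _ ≤ _ := Finset.card_le_card_of_injOn vs' (fun r _ => hmaps r) hvsinj.injOn

open Module in
lemma card_E (hreg : ∀ v : G.V, G.degree v = 3) (hV : Fintype.card G.V = 30) :
    Fintype.card G.E = 45 := by
  classical
  have h1 : ∑ v : G.V, G.degree v = 90 := by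
    rw [Finset.sum_congr rfl fun v _ => hreg v]
    simp [hV, Finset.sum_const]
  have h2 : ∑ v : G.V, G.degree v = 2 * Fintype.card G.E := by
    unfold Multigraph.degree
    rw [Finset.sum_comm]
    have : ∀ e : G.E, (∑ v : G.V, ((if G.fst e = v then 1 else 0) + (if G.snd e = v then 1 else 0))) = 2 := by
      intro e
      rw [Finset.sum_add_distrib, Finset.sum_ite_eq, Finset.sum_ite_eq]
      simp
    rw [Finset.sum_congr rfl fun e _ => this e]
    simp [Finset.sum_const, Finset.card_univ, mul_comm]
  omega

open Module in
lemma sixteen_le_finrank (hE : Fintype.card G.E = 45) (hV : Fintype.card G.V = 30) :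
    16 ≤ finrank (ZMod 2) G.cycleSpace := by
  classical
  let D : (G.E → ZMod 2) →ₗ[ZMod 2] (G.V → ZMod 2) :=
    { toFun := fun x v => ∑ e, G.inc v e * x e
      map_add' := by
        intro a b; funext v
        simp [mul_add, Finset.sum_add_distrib]
      map_smul' := by
        intro c a; funext v
        simp [Finset.mul_sum, mul_left_comm] }
  have hker : G.cycleSpace = LinearMap.ker D := by
    ext y
    constructor
    · intro hy; exact LinearMap.mem_ker.2 (funext fun v => hy v)
    · intro hy v
      have := LinearMap.mem_ker.1 hy
      exact congrFun this v
  let L : (G.V → ZMod 2) →ₗ[ZMod 2] ZMod 2 :=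
    { toFun := fun y => ∑ v, y v
      map_add' := by intro a b; simp [Finset.sum_add_distrib]
      map_smul' := by intro c a; simp [Finset.mul_sum] }
  have hrange : LinearMap.range D ≤ LinearMap.ker L := by
    rintro y ⟨z, rfl⟩
    show (∑ v, ∑ e, G.inc v e * z e) = 0
    rw [Finset.sum_comm]
    have : ∀ e : G.E, (∑ v, G.inc v e * z e) = 0 := by
      intro e
      rw [← Finset.sum_mul]
      have : (∑ v, G.inc v e) = 0 := by
        unfold Multigraph.inc
        rw [Finset.sum_add_distrib, Finset.sum_ite_eq, Finset.sum_ite_eq]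
        simp
        decide
      rw [this, zero_mul]
    rw [Finset.sum_congr rfl fun e _ => this e, Finset.sum_const, smul_zero]
  have hLtop : LinearMap.range L = ⊤ := by
    have hv0 : ∃ v : G.V, True := by
      have : 0 < Fintype.card G.V := by omega
      obtain ⟨v⟩ := Fintype.card_pos_iff.1 this
      exact ⟨v, trivial⟩
    obtain ⟨v0, -⟩ := hv0
    rw [LinearMap.range_eq_top]
    intro c
    refine ⟨Pi.single v0 c, ?_⟩
    show (∑ v, Pi.single v0 c v) = c
    rw [Finset.sum_pi_single' v0 c]
    simp
  have hkerL : finrank (ZMod 2) (LinearMap.ker L) = 29 := by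
    have h := LinearMap.finrank_range_add_finrank_ker L
    rw [hLtop] at h
    rw [finrank_top, finrank_self] at h
    rw [Module.finrank_pi, hV] at h
    omega
  have hrankD : finrank (ZMod 2) (LinearMap.range D) ≤ 29 := by
    rw [← hkerL]
    exact Submodule.finrank_mono hrange
  have h := LinearMap.finrank_range_add_finrank_ker D
  rw [Module.finrank_pi, hE] at h
  rw [hker]
  omega

open Module in
lemma no_three_basis (hreg : ∀ v : G.V, G.degree v = 3) (hV : Fintype.card G.V = 30)
    (hg : GirthHyp G) (B : Finset (G.E → ZMod 2)) (hB : G.IsCycleBasis B)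
    (hch : ∀ e, G.charge B e ≤ 3) : False := by
  classical
  have hnl := noLoop hg
  have hE := card_E hreg hV
  obtain ⟨hmem, hli, hspan⟩ := hB
  have h16 : 16 ≤ B.card := by
    have h1 : Set.finrank (ZMod 2) (B : Set (G.E → ZMod 2)) ≤ B.card :=
      finrank_span_finset_le_card B
    unfold Set.finrank at h1
    rw [hspan] at h1
    exact le_trans (sixteen_le_finrank hE hV) h1
  have hnz : ∀ x ∈ B, x ≠ (0 : G.E → ZMod 2) := by
    intro x hxB
    exact hli.ne_zero ⟨x, hxB⟩
  set T : (G.E → ZMod 2) → Finset G.V := fun x =>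
    Finset.univ.filter (fun v : G.V => ∃ e, x e ≠ 0 ∧ (G.fst e = v ∨ G.snd e = v)) with hT
  clear_value T
  have h8 : ∀ x ∈ B, 8 ≤ (T x).card := by
    intro x hxB
    simp only [hT]
    exact eight_le_card_T hg (hmem x hxB) (hnz x hxB)
  have h4 : ∀ v : G.V, (B.filter fun x => v ∈ T x).card ≤ 4 := by
    intro v
    set Ev : Finset G.E := Finset.univ.filter (fun e => G.fst e = v ∨ G.snd e = v) with hEv
    clear_value Ev
    have hEv3 : Ev.card = 3 := by
      have hd := hreg v
      unfold Multigraph.degree at hd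
      have hterm : ∀ e : G.E, ((if G.fst e = v then 1 else 0) + (if G.snd e = v then 1 else 0))
          = if (G.fst e = v ∨ G.snd e = v) then 1 else 0 := by
        intro e
        by_cases h1 : G.fst e = v <;> by_cases h2 : G.snd e = v
        · exact absurd (h1.trans h2.symm) (hnl e)
        · simp [h1, h2]
        · simp [h1, h2]
        · simp [h1, h2]
      rw [Finset.sum_congr rfl (fun e _ => hterm e), ← Finset.card_filter] at hd
      rw [hEv]
      exact hd
    have hcnt : ∀ x ∈ B, v ∈ T x → 2 ≤ (Ev.filter fun e => x e ≠ 0).card := by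
      intro x hxB hvT
      have hx := hmem x hxB
      have hsum0 : (∑ e ∈ Ev, x e) = 0 := by
        have h0 := hx v
        have hcg : (∑ e : G.E, if (G.fst e = v ∨ G.snd e = v) then x e else 0)
            = ∑ e : G.E, G.inc v e * x e := by
          refine Finset.sum_congr rfl ?_
          intro e _
          by_cases he : G.fst e = v ∨ G.snd e = v
          · rw [if_pos he, inc_eq_one hnl he, one_mul]
          · rw [if_neg he, inc_eq_zero he, zero_mul]
        rw [hEv, Finset.sum_filter, hcg]
        exact h0
      have hcast : (((Ev.filter fun e => x e ≠ 0).card : ℕ) : ZMod 2) = 0 := by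
        have hcg : (∑ e ∈ Ev, (((if x e ≠ 0 then 1 else 0 : ℕ)) : ZMod 2))
            = ∑ e ∈ Ev, x e := by
          refine Finset.sum_congr rfl ?_
          intro e _
          by_cases he : x e = 0
          · simp [he]
          · have h1 : x e = 1 := zmod2_eq_one _ he
            simp [he, h1]
        rw [Finset.card_filter, Nat.cast_sum, hcg, hsum0]
      have hdvd : 2 ∣ (Ev.filter fun e => x e ≠ 0).card :=
        (ZMod.natCast_eq_zero_iff _ 2).1 hcast
      have hpos : 0 < (Ev.filter fun e => x e ≠ 0).card := by
        rw [hT, Finset.mem_filter] at hvT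
        obtain ⟨-, e, hxe, hinc⟩ := hvT
        refine Finset.card_pos.2 ⟨e, ?_⟩
        rw [Finset.mem_filter, hEv, Finset.mem_filter]
        exact ⟨⟨Finset.mem_univ e, hinc⟩, hxe⟩
      omega
    have hsum : 2 * (B.filter fun x => v ∈ T x).card
        ≤ ∑ x ∈ B.filter (fun x => v ∈ T x), (Ev.filter fun e => x e ≠ 0).card := by
      have := Finset.card_nsmul_le_sum (B.filter fun x => v ∈ T x)
        (fun x => (Ev.filter fun e => x e ≠ 0).card) 2 ?_
      · rw [smul_eq_mul, mul_comm] at this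
        exact this
      · intro x hx
        rw [Finset.mem_filter] at hx
        exact hcnt x hx.1 hx.2
    have hsum2 : (∑ x ∈ B.filter (fun x => v ∈ T x), (Ev.filter fun e => x e ≠ 0).card) ≤ 9 := by
      calc ∑ x ∈ B.filter (fun x => v ∈ T x), (Ev.filter fun e => x e ≠ 0).card
          ≤ ∑ x ∈ B, (Ev.filter fun e => x e ≠ 0).card := by
            refine Finset.sum_le_sum_of_subset (Finset.filter_subset _ _)
        _ = ∑ e ∈ Ev, G.charge B e := by
            rw [Finset.sum_congr rfl (fun x _ => Finset.card_filter _ _), Finset.sum_comm]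
            refine Finset.sum_congr rfl ?_
            intro e _
            rw [Multigraph.charge, Finset.card_filter]
        _ ≤ ∑ e ∈ Ev, 3 := Finset.sum_le_sum (fun e _ => hch e)
        _ = 9 := by rw [Finset.sum_const, hEv3]; simp
    have h9 : 2 * (B.filter fun x => v ∈ T x).card ≤ 9 := le_trans hsum hsum2
    clear hsum hsum2
    revert h9
    generalize (B.filter fun x => v ∈ T x).card = c
    intro h9
    omega
  have hlow : 8 * B.card ≤ ∑ x ∈ B, (T x).card := by
    have := Finset.card_nsmul_le_sum B (fun x => (T x).card) 8 h8
    rw [smul_eq_mul, mul_comm] at this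
    exact this
  have hswap : (∑ x ∈ B, (T x).card) = ∑ v : G.V, (B.filter fun x => v ∈ T x).card := by
    have hc : ∀ t : Finset G.V, t.card = ∑ v : G.V, if v ∈ t then 1 else 0 := by
      intro t
      rw [← Finset.card_filter]
      rw [Finset.filter_mem_eq_inter, Finset.univ_inter]
    rw [Finset.sum_congr rfl (fun x _ => hc (T x)), Finset.sum_comm]
    exact Finset.sum_congr rfl (fun v _ => (Finset.card_filter _ _).symm)
  have hhigh : (∑ v : G.V, (B.filter fun x => v ∈ T x).card) ≤ 120 := by
    calc (∑ v : G.V, (B.filter fun x => v ∈ T x).card) ≤ ∑ _v : G.V, 4 :=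
          Finset.sum_le_sum (fun v _ => h4 v)
      _ = 120 := by rw [Finset.sum_const]; simp [Finset.card_univ, hV]
  rw [hswap] at hlow
  have hfin : 8 * B.card ≤ 120 := le_trans hlow hhigh
  clear hlow hswap hhigh h8 h4
  revert hfin h16
  generalize B.card = c
  intro h1 h2
  omega

set_option maxHeartbeats 1000000 in
open Module in
lemma exists_kbasis (G : Multigraph) : ∃ k B, G.IsKBasis k B := by
  classical
  set n := finrank (ZMod 2) G.cycleSpace with hn
  set b : Basis (Fin n) (ZMod 2) G.cycleSpace := finBasis (ZMod 2) G.cycleSpace with hb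
  set f : Fin n → (G.E → ZMod 2) := fun i => (b i : G.E → ZMod 2) with hf
  have hli : LinearIndependent (ZMod 2) f :=
    b.linearIndependent.map' G.cycleSpace.subtype (Submodule.ker_subtype _)
  set B : Finset (G.E → ZMod 2) := Finset.image f Finset.univ with hB
  have hset : (B : Set (G.E → ZMod 2)) = Set.range f := by
    rw [hB, Finset.coe_image, Finset.coe_univ, Set.image_univ]
  refine ⟨B.card, B, ⟨⟨?_, ?_, ?_⟩, ?_⟩⟩
  · intro x hx
    rw [hB, Finset.mem_image] at hx
    obtain ⟨i, -, rfl⟩ := hx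
    exact (b i).2
  · have h : LinearIndependent (ZMod 2) (fun x : Set.range f => (x : G.E → ZMod 2)) :=
      (linearIndepOn_id_range_iff hli.injective).mpr hli
    have hmm : ∀ y : {y // y ∈ B}, (y : G.E → ZMod 2) ∈ Set.range f := by
      intro y
      rw [← hset]
      exact Finset.mem_coe.2 y.2
    let e : {y // y ∈ B} → Set.range f := fun y => ⟨y.1, hmm y⟩
    have einj : Function.Injective e :=
      fun y z hyz => Subtype.ext (show (e y).val = (e z).val from congrArg Subtype.val hyz)
    exact h.comp e einj
  · rw [hset]
    have hfc : Set.range f = ⇑G.cycleSpace.subtype '' Set.range ⇑b := by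
      rw [← Set.range_comp]; rfl
    rw [hfc, Submodule.span_image, b.span_eq, Submodule.map_subtype_top]
  · intro e
    exact Finset.card_filter_le _ _

end TutteAux

/-- The Tutte–Coxeter graph (Tutte 8-cage) — characterized here, via its
uniqueness as the (3,8)-cage, as a 3-regular graph on 30 vertices with girth 8 — has basis
number at least 4. -/
theorem tutteCoxeter_basisNum_ge_four (G : Multigraph)
    (hreg : ∀ v : G.V, G.degree v = 3)
    (hcard : Nat.card G.V = 30)
    (hgirth_lb : ∀ (n : ℕ) (vs : Fin n → G.V) (es : Fin n → G.E),
      G.IsCycleOn n vs es → 1 ≤ n → 8 ≤ n)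
    (hgirth_eq : ∃ (vs : Fin 8 → G.V) (es : Fin 8 → G.E), G.IsCycleOn 8 vs es) :
    4 ≤ G.basisNum := by
  classical
  have hex : {k | ∃ B, G.IsKBasis k B}.Nonempty := by
    obtain ⟨k, B, h⟩ := TutteAux.exists_kbasis G
    exact ⟨k, B, h⟩
  by_contra hcon
  push_neg at hcon
  unfold Multigraph.basisNum at hcon
  obtain ⟨B, hB, hch⟩ := Nat.sInf_mem hex
  have hV : Fintype.card G.V = 30 := by rw [← Nat.card_eq_fintype_card]; exact hcard
  exact TutteAux.no_three_basis hreg hV hgirth_lb B hB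
    (fun e => by have := hch e; omega)
end
end
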